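/- Let (G, ω, μ) be a connected, locally finite weighted graph, let d be an intrinsic pseudo metric on G with finite jump size s whose balls are finite sets, and let V : G → ℝ satisfy V ≥ 0 on G and V(x) ≥ c₀ d(x,x₀)^{-α} for all x ∈ G \ B_{R₀}(x₀), for some x₀ ∈ G, R₀ > 0, c₀ > 0 and α ∈ [0,1]. Fix λ > 1 and r ≥ 2s + R₀, set ρ(x) := max{d(x,x₀)^α, r^α}, and for M, T > 0 define ξ(x,t) := −M ρ(x)/(λT − t) for x ∈ G, t ∈ [0,T). Then there exists T₀ > 0 such that, whenever M = T ∈ (0, T₀], one has V(x) ξ_t(x,t) μ(x) + (1/2) ∑_{y∈G} ω(x,y)(1 − e^{ξ(y,t) − ξ(x,t)})² ≤ 0 for all x ∈ G and t ∈ (0,T). -/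

import Mathlib

/-- Lipschitz bound for rpow away from 0. -/
lemma rpow_lip_one {r a b α : ℝ} (hr : 0 < r) (ha : r ≤ a) (hb : r ≤ b) (hba : b ≤ a)
    (hα0 : 0 ≤ α) (hα1 : α ≤ 1) : a ^ α - b ^ α ≤ r ^ (α - 1) * (a - b) := by
  have hb0 : 0 < b := hr.trans_le hb
  have ha0 : 0 < a := hb0.trans_le hba
  have hs : (0:ℝ) ≤ a / b - 1 := by
    rw [le_sub_iff_add_le, zero_add, le_div_iff₀ hb0]; linarith
  have key : (a / b) ^ α ≤ 1 + α * (a / b - 1) := by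
    have h := rpow_one_add_le_one_add_mul_self (s := a / b - 1) (by linarith) hα0 hα1
    simpa using h
  have hab : a ^ α = b ^ α * (a / b) ^ α := by
    rw [← Real.mul_rpow hb0.le (by positivity)]
    congr 1
    field_simp
  have h1 : b ^ (α - 1) ≤ r ^ (α - 1) :=
    Real.rpow_le_rpow_of_nonpos hr hb (by linarith)
  have hbpow : (0:ℝ) < b ^ α := Real.rpow_pos_of_pos hb0 α
  calc a ^ α - b ^ α = b ^ α * ((a / b) ^ α - 1) := by rw [hab]; ring
    _ ≤ b ^ α * (α * (a / b - 1)) := by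
        apply mul_le_mul_of_nonneg_left (by linarith) hbpow.le
    _ = α * (b ^ (α - 1) * (a - b)) := by
        rw [Real.rpow_sub hb0, Real.rpow_one]
        field_simp
    _ ≤ 1 * (r ^ (α - 1) * (a - b)) := by
        apply mul_le_mul hα1 (mul_le_mul_of_nonneg_right h1 (by linarith))
          (mul_nonneg (Real.rpow_nonneg hb0.le _) (by linarith)) zero_le_one
    _ = r ^ (α - 1) * (a - b) := one_mul _

lemma rpow_lip {r a b α : ℝ} (hr : 0 < r) (ha : r ≤ a) (hb : r ≤ b)
    (hα0 : 0 ≤ α) (hα1 : α ≤ 1) : |a ^ α - b ^ α| ≤ r ^ (α - 1) * |a - b| := by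
  rcases le_total b a with h | h
  · rw [abs_of_nonneg (sub_nonneg.mpr (Real.rpow_le_rpow (hr.le.trans hb) h hα0)),
      abs_of_nonneg (sub_nonneg.mpr h)]
    exact rpow_lip_one hr ha hb h hα0 hα1
  · rw [abs_sub_comm (a ^ α), abs_sub_comm a b,
      abs_of_nonneg (sub_nonneg.mpr (Real.rpow_le_rpow (hr.le.trans ha) h hα0)),
      abs_of_nonneg (sub_nonneg.mpr h)]
    exact rpow_lip_one hr hb ha h hα0 hα1

lemma abs_one_sub_exp_le (x : ℝ) : |1 - Real.exp x| ≤ |x| * Real.exp |x| := by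
  rcases le_total x 0 with h | h
  · have h1 : x + 1 ≤ Real.exp x := Real.add_one_le_exp x
    have h2 : Real.exp x ≤ 1 := by
      simpa using Real.exp_le_exp.mpr h
    rw [abs_of_nonneg (by linarith), abs_of_nonpos h]
    have h3 : (1:ℝ) ≤ Real.exp (-x) := by
      simpa using Real.exp_le_exp.mpr (by linarith : (0:ℝ) ≤ -x)
    nlinarith
  · have h1 : (-x) + 1 ≤ Real.exp (-x) := Real.add_one_le_exp (-x)
    have h2 : (1:ℝ) ≤ Real.exp x := by simpa using Real.exp_le_exp.mpr h
    rw [abs_of_nonpos (by linarith), abs_of_nonneg h]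
    have h4 : Real.exp (-x) * Real.exp x = 1 := by
      rw [← Real.exp_add]; simp
    nlinarith [Real.exp_pos x]


set_option maxHeartbeats 1000000 in
/-- **Lemma 5.1.** With `ρ(x) = max{d(x,x₀)^α, r^α}` and
`ξ(x,t) = −M ρ(x)/(λT − t)`, there is `T₀ > 0` such that, whenever `M = T ∈ (0,T₀]`,
`V(x) ξₜ(x,t) μ(x) + (1/2) ∑_y ω(x,y)(1 − e^{ξ(y,t) − ξ(x,t)})² ≤ 0`
for all `x ∈ G` and `t ∈ (0,T)`. -/
theorem stmt7 {G : Type*} [Countable G] [Infinite G]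
    (μ : G → ℝ) (ω : G → G → ℝ) (d : G → G → ℝ)
    (hμ : ∀ x, 0 < μ x)
    (hω_symm : ∀ x y, ω x y = ω y x)
    (hω_diag : ∀ x, ω x x = 0)
    (hω_nonneg : ∀ x y, 0 ≤ ω x y)
    (hω_sum : ∀ x, Summable fun y => ω x y)
    (hloc : ∀ x : G, {y : G | 0 < ω x y}.Finite)
    (hconn : ∀ x y : G, x ≠ y → ∃ (n : ℕ) (p : ℕ → G),
      p 0 = x ∧ p n = y ∧ ∀ i < n, 0 < ω (p i) (p (i + 1)))
    (hd_symm : ∀ x y, d x y = d y x)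
    (hd_diag : ∀ x, d x x = 0)
    (hd_nonneg : ∀ x y, 0 ≤ d x y)
    (hd_tri : ∀ x y z, d x y ≤ d x z + d z y)
    (s : ℝ) (hs : ∀ x y, 0 < ω x y → d x y ≤ s)
    (hballs : ∀ (x : G) (r : ℝ), {y : G | d y x < r}.Finite)
    (hintr : ∀ x : G, (μ x)⁻¹ * ∑' y, ω x y * d x y ^ 2 ≤ 1)
    (V : G → ℝ) (hV₀ : ∀ x, 0 ≤ V x)
    (x₀ : G) (R₀ c₀ α : ℝ)
    (hR₀ : 0 < R₀) (hc₀ : 0 < c₀) (hα₀ : 0 ≤ α) (hα₁ : α ≤ 1)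
    (hVlow : ∀ x : G, R₀ ≤ d x x₀ → c₀ * d x x₀ ^ (-α) ≤ V x)
    (lam r : ℝ) (hlam : 1 < lam) (hr : 2 * s + R₀ ≤ r)
    (ρ : G → ℝ) (hρ : ∀ x, ρ x = max (d x x₀ ^ α) (r ^ α)) :
    ∃ T₀ > (0 : ℝ), ∀ T : ℝ, 0 < T → T ≤ T₀ →
      ∀ x : G, ∀ t ∈ Set.Ioo (0 : ℝ) T,
        V x * deriv (fun τ : ℝ => -(T * ρ x) / (lam * T - τ)) t * μ x
          + (1 / 2) * ∑' y : G, ω x y *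
              (1 - Real.exp (-(T * ρ y) / (lam * T - t)
                - (-(T * ρ x) / (lam * T - t)))) ^ 2 ≤ 0 := by
  -- the jump size is nonnegative since an edge exists
  have hs0 : 0 ≤ s := by
    obtain ⟨x₁, y₁, hxy⟩ := exists_pair_ne G
    obtain ⟨n, p, h0, hn, he⟩ := hconn x₁ y₁ hxy
    have hnpos : 0 < n := by
      rcases Nat.eq_zero_or_pos n with h | h
      · exact absurd (by rw [← h0, ← hn, h]) hxy
      · exact h
    exact (hd_nonneg (p 0) (p 1)).trans (hs _ _ (he 0 hnpos))
  have hr0 : 0 < r := by linarith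
  have hrpow : 0 < r ^ (α - 1) := Real.rpow_pos_of_pos hr0 _
  have hlam1 : 0 < lam - 1 := by linarith
  set C : ℝ := 1 / (lam - 1) * (r ^ (α - 1) * s) with hCdef
  have hC0 : 0 ≤ C := by
    apply mul_nonneg (by positivity) (mul_nonneg hrpow.le hs0)
  set Kc : ℝ := Real.exp C ^ 2 * (r ^ (α - 1)) ^ 2 with hKcdef
  have hKc0 : 0 < Kc := by positivity
  have hmax : ∀ z, ρ z = (max (d z x₀) r) ^ α := by
    intro z
    rw [hρ]
    rcases le_total (d z x₀) r with h | h
    · rw [max_eq_right (Real.rpow_le_rpow (hd_nonneg _ _) h hα₀), max_eq_right h]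
    · rw [max_eq_left (Real.rpow_le_rpow hr0.le h hα₀), max_eq_left h]
  refine ⟨2 * c₀ / Kc, by positivity, ?_⟩
  intro T hT hTle x t ht
  obtain ⟨ht0, htT⟩ := ht
  have hD : 0 < lam * T - t := by nlinarith
  have hX2 : 0 < (lam * T - t) ^ 2 := by positivity
  have hρx_nn : 0 ≤ ρ x := by
    rw [hρ]
    exact le_trans (Real.rpow_nonneg (hd_nonneg _ _) α) (le_max_left _ _)
  have hderiv : deriv (fun τ : ℝ => -(T * ρ x) / (lam * T - τ)) t
      = -(T * ρ x) / (lam * T - t) ^ 2 := by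
    have h1 : HasDerivAt (fun τ : ℝ => lam * T - τ) (-1) t := by
      simpa using (hasDerivAt_id t).const_sub (lam * T)
    have h2 := HasDerivAt.const_mul (-(T * ρ x)) (h1.inv hD.ne')
    have h3 : (fun τ : ℝ => -(T * ρ x) / (lam * T - τ))
        = fun τ : ℝ => -(T * ρ x) * (lam * T - τ)⁻¹ := by
      funext τ; rw [div_eq_mul_inv]
    have h2' : HasDerivAt (fun τ : ℝ => -(T * ρ x) * (lam * T - τ)⁻¹)
        (-(T * ρ x) * (- -1 / (lam * T - t) ^ 2)) t := h2
    rw [h3, h2'.deriv]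
    field_simp
  rw [hderiv]
  by_cases hcase : R₀ ≤ d x x₀
  · -- far from the origin : use the potential lower bound
    have hdx0 : 0 < d x x₀ := lt_of_lt_of_le hR₀ hcase
    have hVρ : c₀ ≤ V x * ρ x := by
      have hVx := hVlow x hcase
      have hρxlow : d x x₀ ^ α ≤ ρ x := by rw [hρ]; exact le_max_left _ _
      have h1 : c₀ * d x x₀ ^ (-α) * d x x₀ ^ α = c₀ := by
        rw [mul_assoc, ← Real.rpow_add hdx0]; simp
      calc c₀ = c₀ * d x x₀ ^ (-α) * d x x₀ ^ α := h1.symm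
        _ ≤ V x * d x x₀ ^ α :=
            mul_le_mul_of_nonneg_right hVx (Real.rpow_nonneg hdx0.le _)
        _ ≤ V x * ρ x := mul_le_mul_of_nonneg_left hρxlow (hV₀ x)
    have hβ1 : 0 < T / (lam * T - t) := div_pos hT hD
    have hβ2 : T / (lam * T - t) ≤ 1 / (lam - 1) := by
      rw [div_le_div_iff₀ hD hlam1]
      nlinarith
    -- termwise bound
    have hterm : ∀ y, ω x y *
        (1 - Real.exp (-(T * ρ y) / (lam * T - t) - (-(T * ρ x) / (lam * T - t)))) ^ 2
        ≤ Kc * (T / (lam * T - t)) ^ 2 * (ω x y * d x y ^ 2) := by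
      intro y
      by_cases hωy : ω x y = 0
      · simp [hωy]
      have hωpos : 0 < ω x y := (hω_nonneg x y).lt_of_ne (Ne.symm hωy)
      have hds : d x y ≤ s := hs x y hωpos
      have hdxy0 : 0 ≤ d x y := hd_nonneg x y
      set Δ := -(T * ρ y) / (lam * T - t) - (-(T * ρ x) / (lam * T - t)) with hΔ
      have hΔeq : Δ = T / (lam * T - t) * (ρ x - ρ y) := by
        rw [hΔ]; field_simp; ring
      have hρdiff : |ρ x - ρ y| ≤ r ^ (α - 1) * d x y := by
        rw [hmax x, hmax y]
        refine (rpow_lip hr0 (le_max_right _ _) (le_max_right _ _) hα₀ hα₁).trans ?_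
        apply mul_le_mul_of_nonneg_left _ hrpow.le
        refine (abs_max_sub_max_le_abs _ _ _).trans ?_
        have t1 : d x x₀ ≤ d x y + d y x₀ := hd_tri x x₀ y
        have t2 : d y x₀ ≤ d y x + d x x₀ := hd_tri y x₀ x
        rw [hd_symm y x] at t2
        rw [abs_sub_le_iff]
        constructor <;> linarith
      have hΔbd : |Δ| ≤ T / (lam * T - t) * (r ^ (α - 1) * d x y) := by
        rw [hΔeq, abs_mul, abs_of_pos hβ1]
        exact mul_le_mul_of_nonneg_left hρdiff hβ1.le
      have hΔabs : |Δ| ≤ C := by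
        refine hΔbd.trans ?_
        rw [hCdef]
        apply mul_le_mul hβ2 (mul_le_mul_of_nonneg_left hds hrpow.le)
          (mul_nonneg hrpow.le hdxy0) (by positivity)
      have hexp : |1 - Real.exp Δ| ≤ |Δ| * Real.exp C := by
        refine (abs_one_sub_exp_le Δ).trans ?_
        exact mul_le_mul_of_nonneg_left (Real.exp_le_exp.mpr hΔabs) (abs_nonneg Δ)
      have hsq : (1 - Real.exp Δ) ^ 2 ≤ Kc * (T / (lam * T - t)) ^ 2 * d x y ^ 2 := by
        have h2 : (1 - Real.exp Δ) ^ 2 ≤ (|Δ| * Real.exp C) ^ 2 := by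
          rw [← sq_abs (1 - Real.exp Δ)]
          exact pow_le_pow_left₀ (abs_nonneg _) hexp 2
        refine h2.trans ?_
        calc (|Δ| * Real.exp C) ^ 2
            ≤ (T / (lam * T - t) * (r ^ (α - 1) * d x y) * Real.exp C) ^ 2 := by
              apply pow_le_pow_left₀ (mul_nonneg (abs_nonneg _) (Real.exp_nonneg _))
                (mul_le_mul_of_nonneg_right hΔbd (Real.exp_nonneg _))
          _ = Kc * (T / (lam * T - t)) ^ 2 * d x y ^ 2 := by
              rw [hKcdef]; ring
      calc ω x y * (1 - Real.exp Δ) ^ 2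
          ≤ ω x y * (Kc * (T / (lam * T - t)) ^ 2 * d x y ^ 2) :=
            mul_le_mul_of_nonneg_left hsq (hω_nonneg x y)
        _ = Kc * (T / (lam * T - t)) ^ 2 * (ω x y * d x y ^ 2) := by ring
    -- summability
    have hg : Summable (fun y => ω x y * d x y ^ 2) := by
      refine Summable.of_nonneg_of_le
        (fun y => mul_nonneg (hω_nonneg x y) (sq_nonneg _))
        (fun y => ?_) ((hω_sum x).mul_left (s ^ 2))
      by_cases hωy : ω x y = 0
      · simp [hωy]
      have hωpos : 0 < ω x y := (hω_nonneg x y).lt_of_ne (Ne.symm hωy)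
      have hds : d x y ≤ s := hs x y hωpos
      have h1 : d x y ^ 2 ≤ s ^ 2 := pow_le_pow_left₀ (hd_nonneg x y) hds 2
      nlinarith
    have hf : Summable (fun y => ω x y *
        (1 - Real.exp (-(T * ρ y) / (lam * T - t) - (-(T * ρ x) / (lam * T - t)))) ^ 2) :=
      Summable.of_nonneg_of_le
        (fun y => mul_nonneg (hω_nonneg x y) (sq_nonneg _)) hterm
        (hg.mul_left _)
    have hsum_le : (∑' y, ω x y *
        (1 - Real.exp (-(T * ρ y) / (lam * T - t) - (-(T * ρ x) / (lam * T - t)))) ^ 2)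
        ≤ Kc * (T / (lam * T - t)) ^ 2 * μ x := by
      calc (∑' y, ω x y *
          (1 - Real.exp (-(T * ρ y) / (lam * T - t) - (-(T * ρ x) / (lam * T - t)))) ^ 2)
          ≤ ∑' y, Kc * (T / (lam * T - t)) ^ 2 * (ω x y * d x y ^ 2) :=
            Summable.tsum_le_tsum hterm hf (hg.mul_left _)
        _ = Kc * (T / (lam * T - t)) ^ 2 * ∑' y, ω x y * d x y ^ 2 := tsum_mul_left
        _ ≤ Kc * (T / (lam * T - t)) ^ 2 * μ x := by
            apply mul_le_mul_of_nonneg_left _ (by positivity)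
            have h := hintr x
            rw [inv_mul_le_iff₀ (hμ x)] at h
            simpa using h
    have hfirst : V x * (-(T * ρ x) / (lam * T - t) ^ 2) * μ x
        ≤ -(c₀ * (T * μ x)) / (lam * T - t) ^ 2 := by
      have e1 : V x * (-(T * ρ x) / (lam * T - t) ^ 2) * μ x
          = -(V x * ρ x * (T * μ x)) / (lam * T - t) ^ 2 := by ring
      rw [e1, div_le_div_iff_of_pos_right hX2]
      have : c₀ * (T * μ x) ≤ V x * ρ x * (T * μ x) :=
        mul_le_mul_of_nonneg_right hVρ (mul_nonneg hT.le (hμ x).le)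
      linarith
    have hKcT : T * Kc ≤ 2 * c₀ := (le_div_iff₀ hKc0).mp hTle
    calc V x * (-(T * ρ x) / (lam * T - t) ^ 2) * μ x + 1 / 2 * ∑' y, ω x y *
          (1 - Real.exp (-(T * ρ y) / (lam * T - t) - (-(T * ρ x) / (lam * T - t)))) ^ 2
        ≤ -(c₀ * (T * μ x)) / (lam * T - t) ^ 2
          + 1 / 2 * (Kc * (T / (lam * T - t)) ^ 2 * μ x) :=
          add_le_add hfirst (mul_le_mul_of_nonneg_left hsum_le (by norm_num))
      _ = μ x * T / (lam * T - t) ^ 2 * (1 / 2 * (Kc * T) - c₀) := by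
          field_simp
          ring
      _ ≤ 0 := by
          apply mul_nonpos_of_nonneg_of_nonpos
          · exact div_nonneg (mul_nonneg (hμ x).le hT.le) hX2.le
          · nlinarith
  · -- close to the origin : the weight ρ is locally constant
    push_neg at hcase
    have hsum0 : (∑' y, ω x y *
        (1 - Real.exp (-(T * ρ y) / (lam * T - t) - (-(T * ρ x) / (lam * T - t)))) ^ 2)
        = ∑' _ : G, (0 : ℝ) := by
      apply tsum_congr
      intro y
      by_cases hωy : ω x y = 0
      · simp [hωy]
      have hωpos : 0 < ω x y := (hω_nonneg x y).lt_of_ne (Ne.symm hωy)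
      have hds : d x y ≤ s := hs x y hωpos
      have hdy : d y x₀ ≤ r := by
        have t2 : d y x₀ ≤ d y x + d x x₀ := hd_tri y x₀ x
        rw [hd_symm y x] at t2
        linarith
      have hρy : ρ y = r ^ α := by
        rw [hρ]
        exact max_eq_right (Real.rpow_le_rpow (hd_nonneg _ _) hdy hα₀)
      have hρx : ρ x = r ^ α := by
        rw [hρ]
        exact max_eq_right (Real.rpow_le_rpow (hd_nonneg _ _) (by linarith) hα₀)
      rw [hρy, hρx, sub_self, Real.exp_zero, sub_self]
      simp
    rw [hsum0, tsum_zero]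
    have h1 : -(T * ρ x) / (lam * T - t) ^ 2 ≤ 0 :=
      div_nonpos_of_nonpos_of_nonneg (by nlinarith) hX2.le
    have h2 : V x * (-(T * ρ x) / (lam * T - t) ^ 2) ≤ 0 :=
      mul_nonpos_of_nonneg_of_nonpos (hV₀ x) h1
    have h3 : V x * (-(T * ρ x) / (lam * T - t) ^ 2) * μ x ≤ 0 :=
      mul_nonpos_of_nonpos_of_nonneg h2 (hμ x).le
    linarith
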